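/- Let A be a k-ary algebra (k-linear operation, not necessarily symmetric) over a field of characteristic zero satisfying w_d^{(k)} = 0 identically. Then the totally symmetrized operation [a_1...a_k] = Σ_{σ∈S_k} (a_{σ(1)}...a_{σ(k)}) satisfies the identity t_d^{(k)} = 0, where t_d^{(k)} is the sum of all distinct multilinear degree-d monomials built from the symmetric operation. -/

import Mathlib

/-- `wk k f fuel l`: fuel-based recursion realizing
`w₁⁽ᵏ⁾(a) = a` and `wₙ⁽ᵏ⁾ = Σ_{n=i₁+⋯+i_k, iⱼ ≥ 1} f(w_{i₁}⁽ᵏ⁾(…),…,w_{i_k}⁽ᵏ⁾(…))`,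
the sum of all distinct multilinear monomials built from the `k`-ary operation `f`
with arguments in the natural order. -/
def wk {A : Type*} [AddCommGroup A] [Module ℚ A] (k : ℕ)
    (f : MultilinearMap ℚ (fun _ : Fin k => A) A) : ℕ → List A → A
  | 0, _ => 0
  | _ + 1, [a] => a
  | fuel + 1, l =>
      ∑ c ∈ (Finset.Nat.antidiagonalTuple k l.length).filter (fun c => ∀ i, 1 ≤ c i),
        f (fun i => wk k f fuel
          ((l.drop (∑ j ∈ Finset.univ.filter (fun j => j < i), c j)).take (c i)))

/-- `Wk k f [a₁,…,aₙ] = wₙ⁽ᵏ⁾(a₁,…,aₙ)`. -/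
def Wk {A : Type*} [AddCommGroup A] [Module ℚ A] (k : ℕ)
    (f : MultilinearMap ℚ (fun _ : Fin k => A) A) (l : List A) : A :=
  wk k f l.length l

/-- `tk k f fuel l`: fuel-based recursion computing `tₙ⁽ᵏ⁾(a₁,…,aₙ)`, the sum of all
distinct multilinear degree-`n` monomials built from a totally symmetric `k`-ary
operation `f`: the sum is over all partitions of the index set into `k` nonempty
blocks, encoded by the surjective block-assignment functions `p` normalized so that
blocks are listed in order of first occurrence. -/
noncomputable def tk {A : Type*} [AddCommGroup A] [Module ℚ A] (k : ℕ)
    (f : MultilinearMap ℚ (fun _ : Fin k => A) A) : ℕ → List A → A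
  | 0, _ => 0
  | _ + 1, [a] => a
  | fuel + 1, l =>
      letI : DecidablePred (fun p : Fin l.length → Fin k =>
          Function.Surjective p ∧ ∀ i b', b' < p i → ∃ j, j < i ∧ p j = b') :=
        fun _ => Classical.dec _
      ∑ p ∈ Finset.univ.filter (fun p : Fin l.length → Fin k =>
          Function.Surjective p ∧ ∀ i b', b' < p i → ∃ j, j < i ∧ p j = b'),
        f (fun b => tk k f fuel
          (((List.finRange l.length).filter (fun i => p i = b)).map l.get))

/-- `Tk k f [a₁,…,aₙ] = tₙ⁽ᵏ⁾(a₁,…,aₙ)`. -/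
noncomputable def Tk {A : Type*} [AddCommGroup A] [Module ℚ A] (k : ℕ)
    (f : MultilinearMap ℚ (fun _ : Fin k => A) A) (l : List A) : A :=
  tk k f l.length l


/-! ### Auxiliary combinatorial infrastructure -/

namespace SymW
open Finset Function

variable {k m : ℕ}

/-- offset of block `b` in composition `c` -/
def off (c : Fin k → ℕ) (b : Fin k) : ℕ := ∑ j ∈ Finset.univ.filter (fun j => j < b), c j

lemma off_add_le_of_lt (c : Fin k → ℕ) {b b' : Fin k} (h : b < b') :
    off c b + c b ≤ off c b' := by
  have hsub : insert b (Finset.univ.filter (fun j => j < b))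
      ⊆ Finset.univ.filter (fun j => j < b') := by
    intro j hj
    rcases Finset.mem_insert.1 hj with rfl | hj
    · simp [h]
    · simp only [Finset.mem_filter] at hj ⊢
      exact ⟨hj.1, hj.2.trans h⟩
  have hb : b ∉ Finset.univ.filter (fun j => j < b) := by simp
  calc off c b + c b = ∑ j ∈ insert b (Finset.univ.filter (fun j => j < b)), c j := by
        rw [Finset.sum_insert hb, add_comm, off]
    _ ≤ _ := Finset.sum_le_sum_of_subset hsub

lemma off_add_le (c : Fin k → ℕ) (b : Fin k) : off c b + c b ≤ ∑ j, c j := by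
  have hsub : insert b (Finset.univ.filter (fun j => j < b)) ⊆ Finset.univ := by
    intro j _; exact Finset.mem_univ j
  have hb : b ∉ Finset.univ.filter (fun j => j < b) := by simp
  calc off c b + c b = ∑ j ∈ insert b (Finset.univ.filter (fun j => j < b)), c j := by
        rw [Finset.sum_insert hb, add_comm, off]
    _ ≤ _ := Finset.sum_le_sum_of_subset hsub

lemma seg_unique {c : Fin k → ℕ} {b b' : Fin k} {v : ℕ}
    (h1 : off c b ≤ v) (h2 : v < off c b + c b)
    (h3 : off c b' ≤ v) (h4 : v < off c b' + c b') : b = b' := by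
  rcases lt_trichotomy b b' with h | h | h
  · exact absurd (lt_of_lt_of_le h2 ((off_add_le_of_lt c h).trans h3)) (lt_irrefl v)
  · exact h
  · exact absurd (lt_of_lt_of_le h4 ((off_add_le_of_lt c h).trans h1)) (lt_irrefl v)

/-- The "blocks to positions" equivalence. -/
noncomputable def sigEquiv (c : Fin k → ℕ) : (Σ b : Fin k, Fin (c b)) ≃ Fin (∑ j, c j) :=
  Equiv.ofBijective
    (fun x => ⟨off c x.1 + x.2.1, lt_of_lt_of_le (by have := x.2.2; omega) (off_add_le c x.1)⟩)
    (by
      rw [Fintype.bijective_iff_injective_and_card]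
      constructor
      · rintro ⟨b, t⟩ ⟨b', t'⟩ h
        simp only [Fin.mk.injEq] at h
        have hb : b = b' := seg_unique (c := c) (b := b) (b' := b')
          (v := off c b + t.1) (Nat.le_add_right _ _) (by have := t.2; omega)
          (by omega) (by rw [h]; have := t'.2; omega)
        subst hb
        have : t = t' := Fin.ext (by omega)
        rw [this]
      · simp )

lemma sigEquiv_apply (c : Fin k → ℕ) (x : Σ b : Fin k, Fin (c b)) :
    ((sigEquiv c x : Fin (∑ j, c j)) : ℕ) = off c x.1 + x.2.1 := rfl

/-- indices in block `b` of `q`, in increasing order -/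
def blkIdx (q : Fin m → Fin k) (b : Fin k) : List (Fin m) :=
  (List.finRange m).filter (fun i => decide (q i = b))

lemma mem_blkIdx {q : Fin m → Fin k} {b : Fin k} {i : Fin m} :
    i ∈ blkIdx q b ↔ q i = b := by
  simp [blkIdx, List.mem_filter, List.mem_finRange]

lemma nodup_blkIdx (q : Fin m → Fin k) (b : Fin k) : (blkIdx q b).Nodup :=
  (List.nodup_finRange m).filter _

lemma q_get_blkIdx (q : Fin m → Fin k) (b : Fin k) (t : Fin (blkIdx q b).length) :
    q ((blkIdx q b).get t) = b :=
  mem_blkIdx.1 (by rw [List.get_eq_getElem]; exact List.getElem_mem t.2)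

lemma length_blkIdx (q : Fin m → Fin k) (b : Fin k) :
    (blkIdx q b).length = (Finset.univ.filter (fun i => q i = b)).card := by
  classical
  rw [← List.toFinset_card_of_nodup (nodup_blkIdx q b)]
  congr 1
  ext i
  simp [mem_blkIdx]

lemma sum_length_blkIdx (q : Fin m → Fin k) :
    ∑ b, (blkIdx q b).length = m := by
  classical
  simp only [length_blkIdx]
  have := Finset.card_eq_sum_card_fiberwise
    (f := q) (s := Finset.univ) (t := Finset.univ) (fun x _ => Finset.mem_univ _)
  rw [Finset.card_univ, Fintype.card_fin] at this
  exact this.symm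

lemma blkIdx_ne_nil {q : Fin m → Fin k} (hq : Surjective q) (b : Fin k) :
    blkIdx q b ≠ [] := by
  obtain ⟨i, hi⟩ := hq b
  exact List.ne_nil_of_mem (mem_blkIdx.2 hi)

lemma blkIdx_eq_nil_of_not_surj {q : Fin m → Fin k} (hq : ¬ Surjective q) :
    ∃ b, blkIdx q b = [] := by
  simp only [Surjective, not_forall] at hq
  obtain ⟨b, hb⟩ := hq
  refine ⟨b, List.eq_nil_iff_forall_not_mem.2 fun i hi => hb ⟨i, mem_blkIdx.1 hi⟩⟩

lemma length_blkIdx_lt {q : Fin m → Fin k} (hk : 2 ≤ k) (hq : Surjective q) (b : Fin k) :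
    (blkIdx q b).length + 1 ≤ m := by
  obtain ⟨b', hb'⟩ : ∃ b' : Fin k, b' ≠ b := by
    have : Nontrivial (Fin k) := Fin.nontrivial_iff_two_le.2 hk
    exact exists_ne b
  have h1 : 1 ≤ (blkIdx q b').length :=
    List.length_pos_iff.2 (blkIdx_ne_nil hq b')
  have : (blkIdx q b).length + (blkIdx q b').length ≤ ∑ j, (blkIdx q j).length := by
    rw [← Finset.sum_pair (f := fun j => (blkIdx q j).length) (Ne.symm hb')]
    exact Finset.sum_le_sum_of_subset (by intro j _; exact Finset.mem_univ j)
  rw [sum_length_blkIdx q] at this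
  omega

/-- normalization predicate: blocks appear in order of first occurrence -/
def Nrm (p : Fin m → Fin k) : Prop := ∀ i b', b' < p i → ∃ j, j < i ∧ p j = b'

lemma nrm_unique {p : Fin m → Fin k} (hs : Surjective p) (h1 : Nrm p)
    (ρ : Equiv.Perm (Fin k)) (h2 : Nrm (⇑ρ ∘ p)) : ∀ b, ρ b = b := by
  suffices H : ∀ v : ℕ, ∀ b : Fin k, (b : ℕ) = v → ρ b = b by exact fun b => H b b rfl
  intro v
  induction v using Nat.strong_induction_on with
  | _ v IH0 =>
  rintro b rfl
  have IH : ∀ b' : Fin k, (b' : ℕ) < (b : ℕ) → ρ b' = b' := fun b' h => IH0 b' h b' rfl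
  have hSne : (Finset.univ.filter (fun i => p i = b)).Nonempty := by
    obtain ⟨i, hi⟩ := hs b
    exact ⟨i, Finset.mem_filter.2 ⟨Finset.mem_univ i, hi⟩⟩
  set i := (Finset.univ.filter (fun i => p i = b)).min' hSne with hidef
  have hpi : p i = b :=
    (Finset.mem_filter.1 ((Finset.univ.filter (fun i => p i = b)).min'_mem hSne)).2
  have hlt : ∀ j, j < i → p j < b := by
    intro j hj
    rcases lt_trichotomy (p j) b with h | h | h
    · exact h
    · have hle : i ≤ j := Finset.min'_le _ j (Finset.mem_filter.2 ⟨Finset.mem_univ j, h⟩)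
      exact absurd hle (by omega)
    · obtain ⟨j', hj', hpj'⟩ := h1 j b h
      have hle : i ≤ j' := Finset.min'_le _ j' (Finset.mem_filter.2 ⟨Finset.mem_univ j', hpj'⟩)
      exact absurd hle (by omega)
  have hle : ρ b ≤ b := by
    by_contra hcon
    push_neg at hcon
    obtain ⟨j, hj, hpj⟩ := h2 i b (by simpa [hpi] using hcon)
    have h3 : p j < b := hlt j hj
    have h4 : ρ (p j) = p j := IH (p j) h3
    simp only [comp_apply] at hpj
    rw [h4] at hpj
    exact absurd hpj (by omega)
  rcases lt_or_eq_of_le hle with h | h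
  · have := IH (ρ b) h
    have := ρ.injective this
    omega
  · exact Fin.ext (by omega)

set_option maxHeartbeats 1000000 in
lemma nrm_exists {q : Fin m → Fin k} (hq : Surjective q) :
    ∃ ρ : Equiv.Perm (Fin k), Nrm (⇑ρ ∘ q) := by
  classical
  have hne : ∀ b : Fin k, (Finset.univ.filter (fun i => q i = b)).Nonempty := by
    intro b; obtain ⟨i, hi⟩ := hq b
    exact ⟨i, Finset.mem_filter.2 ⟨Finset.mem_univ i, hi⟩⟩
  set fI : Fin k → Fin m := fun b => (Finset.univ.filter (fun i => q i = b)).min' (hne b)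
    with hfI
  have hfm : ∀ b, q (fI b) = b := fun b =>
    (Finset.mem_filter.1 ((Finset.univ.filter (fun i => q i = b)).min'_mem (hne b))).2
  have hfi : Injective fI := fun b b' h => by rw [← hfm b, ← hfm b', h]
  have hcard : (Finset.univ.image fI).card = k := by
    rw [Finset.card_image_of_injective _ hfi, Finset.card_univ, Fintype.card_fin]
  set e := (Finset.univ.image fI).orderIsoOfFin hcard with he
  set ρ₀ : Fin k → Fin k := fun b => e.symm ⟨fI b, Finset.mem_image_of_mem _ (Finset.mem_univ b)⟩
    with hρ₀
  have hmono : ∀ b b' : Fin k, ρ₀ b < ρ₀ b' ↔ fI b < fI b' := by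
    intro b b'
    simp only [hρ₀]
    rw [e.symm.lt_iff_lt, Subtype.mk_lt_mk]
  have hρinj : Injective ρ₀ := by
    intro b b' h
    have h2 : (⟨fI b, Finset.mem_image_of_mem _ (Finset.mem_univ b)⟩
          : {x // x ∈ Finset.univ.image fI})
        = ⟨fI b', Finset.mem_image_of_mem _ (Finset.mem_univ b')⟩ := e.symm.injective h
    exact hfi (congrArg Subtype.val h2)
  obtain ⟨ρinv, hbij⟩ : ∃ ρ : Equiv.Perm (Fin k), ⇑ρ = ρ₀ :=
    ⟨Equiv.ofBijective ρ₀ (Finite.injective_iff_bijective.1 hρinj), rfl⟩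
  refine ⟨ρinv, ?_⟩
  intro i b' hb'
  rw [comp_apply, hbij] at hb'
  obtain ⟨b'', rfl⟩ : ∃ b'', ρinv b'' = b' := ⟨ρinv.symm b', ρinv.apply_symm_apply b'⟩
  rw [hbij] at hb'
  have h5 : fI b'' < fI (q i) := (hmono _ _).1 hb'
  have h6 : fI (q i) ≤ i := Finset.min'_le (Finset.univ.filter (fun j => q j = q i)) i
    (Finset.mem_filter.2 ⟨Finset.mem_univ i, rfl⟩)
  exact ⟨fI b'', by omega, by rw [comp_apply, hfm b'']⟩

lemma blkIdx_comp_inv (p : Fin m → Fin k) (τ : Equiv.Perm (Fin k)) (b : Fin k) :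
    blkIdx (⇑τ⁻¹ ∘ p) b = blkIdx p (τ b) := by
  unfold blkIdx
  apply List.filter_congr
  intro i _
  apply decide_eq_decide.2
  constructor
  · intro h
    rw [comp_apply] at h
    rw [← h, Equiv.Perm.inv_def, Equiv.apply_symm_apply]
  · intro h
    rw [comp_apply, h, Equiv.Perm.inv_def, Equiv.symm_apply_apply]

lemma sum_nrm_perm {M : Type*} [AddCommMonoid M] (X : (Fin m → Fin k) → M) :
    ∑ p ∈ Finset.univ.filter (fun p : Fin m → Fin k =>
        Surjective p ∧ ∀ i b', b' < p i → ∃ j, j < i ∧ p j = b'),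
      ∑ τ : Equiv.Perm (Fin k), X (⇑τ⁻¹ ∘ p)
    = ∑ q ∈ Finset.univ.filter (fun q : Fin m → Fin k => Surjective q), X q := by
  classical
  rw [Finset.sum_sigma' (Finset.univ.filter (fun p : Fin m → Fin k =>
      Surjective p ∧ ∀ i b', b' < p i → ∃ j, j < i ∧ p j = b'))
    (fun _ => (Finset.univ : Finset (Equiv.Perm (Fin k))))]
  refine Finset.sum_bij (fun x _ => ⇑x.2⁻¹ ∘ x.1) ?_ ?_ ?_ ?_
  · rintro ⟨p, τ⟩ hx
    simp only [Finset.mem_sigma, Finset.mem_filter] at hx ⊢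
    exact ⟨Finset.mem_univ _, (Equiv.surjective _).comp hx.1.2.1⟩
  · rintro ⟨p₁, τ₁⟩ h₁ ⟨p₂, τ₂⟩ h₂ h
    simp only [Finset.mem_sigma, Finset.mem_filter] at h₁ h₂
    have hfun : ∀ i, p₁ i = τ₁ (τ₂⁻¹ (p₂ i)) := by
      intro i
      have := congrFun h i
      simp only [comp_apply] at this
      have := congrArg τ₁ this
      rwa [Equiv.Perm.inv_def, Equiv.apply_symm_apply] at this
    have hnrm : Nrm (⇑(τ₁ * τ₂⁻¹) ∘ p₂) := by
      have heq : ⇑(τ₁ * τ₂⁻¹) ∘ p₂ = p₁ := by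
        funext i; simp only [comp_apply, Equiv.Perm.mul_apply]; exact (hfun i).symm
      rw [heq]; exact h₁.1.2.2
    have hid := nrm_unique h₂.1.2.1 h₂.1.2.2 (τ₁ * τ₂⁻¹) hnrm
    have hττ : τ₁ = τ₂ := by
      apply Equiv.ext
      intro x
      have := hid (τ₂ x)
      simpa [Equiv.Perm.mul_apply] using this
    have hpp : p₁ = p₂ := by
      funext i
      rw [hfun i, hττ, Equiv.Perm.inv_def, Equiv.apply_symm_apply]
    subst hpp hττ
    rfl
  · intro q hq
    simp only [Finset.mem_filter] at hq
    obtain ⟨ρ, hρ⟩ := nrm_exists hq.2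
    refine ⟨⟨⇑ρ ∘ q, ρ⟩, ?_, ?_⟩
    · simp only [Finset.mem_sigma, Finset.mem_filter]
      exact ⟨⟨Finset.mem_univ _, (Equiv.surjective _).comp hq.2, hρ⟩, Finset.mem_univ _⟩
    · funext i
      simp [Equiv.Perm.inv_def]
  · intros; rfl

variable {α : Type*}

/-- the block of `v` with index `b` -/
def blockL (v : Fin m → α) (q : Fin m → Fin k) (b : Fin k) : List α := (blkIdx q b).map v

def lenB (v : Fin m → α) (q : Fin m → Fin k) (b : Fin k) : ℕ := (blockL v q b).length

lemma lenB_eq (v : Fin m → α) (q : Fin m → Fin k) (b : Fin k) :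
    lenB v q b = (blkIdx q b).length := List.length_map _

lemma sum_lenB (v : Fin m → α) (q : Fin m → Fin k) : ∑ b, lenB v q b = m := by
  simp only [lenB_eq]; exact sum_length_blkIdx q

section BigPerm

variable (v : Fin m → α) (q : Fin m → Fin k) (g : ∀ b, Equiv.Perm (Fin (lenB v q b)))

def toF : (Σ b : Fin k, Fin (lenB v q b)) → Fin m :=
  fun x => (blkIdx q x.1).get (Fin.cast (lenB_eq v q x.1) ((g x.1) x.2))

lemma toF_inj : Injective (toF v q g) := by
  rintro ⟨b, t⟩ ⟨b', t'⟩ h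
  have hb : b = b' := by
    have h1 : q (toF v q g ⟨b, t⟩) = b := q_get_blkIdx q b _
    have h2 : q (toF v q g ⟨b', t'⟩) = b' := q_get_blkIdx q b' _
    rw [h] at h1
    exact h1.symm.trans h2
  subst hb
  have := (nodup_blkIdx q b).get_inj_iff.1 h
  have hval : ((g b) t : ℕ) = ((g b) t' : ℕ) := by
    have := congrArg Fin.val this
    simpa using this
  have : (g b) t = (g b) t' := Fin.ext hval
  rw [(g b).injective this]

noncomputable def bigPerm : Equiv.Perm (Fin m) :=
  ((finCongr (sum_lenB v q).symm).trans (sigEquiv (fun b => lenB v q b)).symm).trans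
    (Equiv.ofBijective (toF v q g)
      ((Fintype.bijective_iff_injective_and_card _).2 ⟨toF_inj v q g,
        by simp [Fintype.card_sigma, sum_lenB]⟩))

lemma bigPerm_apply {b : Fin k} {t : Fin (lenB v q b)} {i : Fin m}
    (hi : (i : ℕ) = off (fun b => lenB v q b) b + (t : ℕ)) :
    bigPerm v q g i = (blkIdx q b).get (Fin.cast (lenB_eq v q b) ((g b) t)) := by
  have h1 : (finCongr (sum_lenB v q).symm) i = sigEquiv (fun b => lenB v q b) ⟨b, t⟩ :=
    Fin.ext (by rw [sigEquiv_apply]; simpa using hi)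
  simp only [bigPerm, Equiv.trans_apply]
  rw [h1, Equiv.symm_apply_apply]
  rfl

lemma q_bigPerm {b : Fin k} {t : Fin (lenB v q b)} {i : Fin m}
    (hi : (i : ℕ) = off (fun b => lenB v q b) b + (t : ℕ)) :
    q (bigPerm v q g i) = b := by
  rw [bigPerm_apply v q g hi]; exact q_get_blkIdx q b _

lemma exists_seg' (c : Fin k → ℕ) (hsum : ∑ j, c j = m) (i : Fin m) :
    ∃ (b : Fin k) (t : Fin (c b)), (i : ℕ) = off c b + (t : ℕ) := by
  obtain ⟨x, hx⟩ := (sigEquiv c).surjective (Fin.cast hsum.symm i)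
  have hv := congrArg Fin.val hx
  rw [sigEquiv_apply, Fin.coe_cast] at hv
  exact ⟨x.1, x.2, hv.symm⟩

end BigPerm
end SymW

namespace SymW
open Finset Function
section E
variable {k m : ℕ} {α : Type*}

set_option maxHeartbeats 1000000 in
lemma sum_blocks_eq {M₀ : Type*} [AddCommMonoid M₀] (v : Fin m → α)
    (M : (Fin k → List α) → M₀) :
    ∑ q : Fin m → Fin k, ∑ g : (∀ b, Equiv.Perm (Fin (lenB v q b))),
        M (fun b => List.ofFn fun t => (blockL v q b).get ((g b) t))
    = ∑ σ : Equiv.Perm (Fin m), ∑ c ∈ Finset.Nat.antidiagonalTuple k m,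
        M (fun i => (((List.ofFn fun j => v (σ j)).drop (off c i)).take (c i))) := by
  classical
  rw [Finset.sum_sigma' (Finset.univ : Finset (Fin m → Fin k))
    (fun q => (Finset.univ : Finset (∀ b, Equiv.Perm (Fin (lenB v q b)))))]
  rw [Finset.sum_sigma' (Finset.univ : Finset (Equiv.Perm (Fin m)))
    (fun _ => Finset.Nat.antidiagonalTuple k m)]
  refine Finset.sum_bij
    (fun x _ => (⟨bigPerm v x.1 x.2, fun b => lenB v x.1 b⟩ :
      Σ _ : Equiv.Perm (Fin m), (Fin k → ℕ))) ?_ ?_ ?_ ?_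
  · rintro ⟨q, g⟩ -
    simp only [Finset.mem_sigma, Finset.mem_univ, true_and]
    exact Finset.Nat.mem_antidiagonalTuple.2 (sum_lenB v q)
  · -- injectivity
    intro x1 hx1 x2 hx2 h
    obtain ⟨q, g⟩ := x1
    obtain ⟨q', g'⟩ := x2
    obtain ⟨hσ, hc'⟩ := Sigma.ext_iff.1 h
    simp only at hσ hc'
    have hc : (fun b => lenB v q b) = (fun b => lenB v q' b) := eq_of_heq hc'
    have hsum : ∑ j, lenB v q j = m := sum_lenB v q
    have hq : q = q' := by
      funext j
      set i := (bigPerm v q g).symm j with hidef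
      have hj : bigPerm v q g i = j := (bigPerm v q g).apply_symm_apply j
      have hj' : bigPerm v q' g' i = j := by rw [← hσ]; exact hj
      obtain ⟨b, t, ht⟩ := exists_seg' (fun b => lenB v q b) hsum i
      have e1 : q j = b := by rw [← hj]; exact q_bigPerm v q g ht
      have e2 : q' j = b := by
        rw [← hj']
        refine q_bigPerm v q' g' (b := b) (t := Fin.cast (congrFun hc b) t) ?_
        have hoff : off (fun b => lenB v q b) b = off (fun b => lenB v q' b) b :=
          Finset.sum_congr rfl (fun j _ => congrFun hc j)
        rw [ht, hoff, Fin.coe_cast]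
      rw [e1, e2]
    subst hq
    have hg : g = g' := by
      funext b
      apply Equiv.ext
      intro t
      have hlt : off (fun b => lenB v q b) b + (t : ℕ) < m := by
        have h1 := off_add_le (fun b => lenB v q b) b
        have h2 := t.2
        omega
      set i : Fin m := ⟨off (fun b => lenB v q b) b + (t : ℕ), hlt⟩ with hidef
      have e1 := bigPerm_apply v q g (b := b) (t := t) (i := i) rfl
      have e2 := bigPerm_apply v q g' (b := b) (t := t) (i := i) rfl
      rw [hσ, e2] at e1
      have := (nodup_blkIdx q b).get_inj_iff.1 e1.symm
      have hval := congrArg Fin.val this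
      simp only [Fin.coe_cast] at hval
      exact Fin.ext hval
    subst hg
    rfl
  · -- surjectivity
    rintro ⟨σ, c⟩ hy
    simp only [Finset.mem_sigma, Finset.mem_univ, true_and] at hy
    have hsum : ∑ j, c j = m := Finset.Nat.mem_antidiagonalTuple.1 hy
    set q : Fin m → Fin k := fun j => ((sigEquiv c).symm (Fin.cast hsum.symm (σ.symm j))).1
      with hqdef
    set φ : ∀ b, Fin (c b) → Fin m := fun b t => σ (Fin.cast hsum (sigEquiv c ⟨b, t⟩))
      with hφdef
    have hq1 : ∀ (b) (t : Fin (c b)), q (φ b t) = b := by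
      intro b t
      rw [hqdef, hφdef]
      simp only
      rw [Equiv.symm_apply_apply]
      have : Fin.cast hsum.symm (Fin.cast hsum (sigEquiv c ⟨b, t⟩)) = sigEquiv c ⟨b, t⟩ :=
        Fin.ext rfl
      rw [this, Equiv.symm_apply_apply]
    have hφinj : ∀ b, Injective (φ b) := by
      intro b t t' h
      rw [hφdef] at h
      simp only at h
      have h1 := σ.injective h
      have h2 : sigEquiv c ⟨b, t⟩ = sigEquiv c ⟨b, t'⟩ := by
        apply Fin.ext
        have := congrArg Fin.val h1
        simpa [Fin.coe_cast] using this
      have h3 := (sigEquiv c).injective h2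
      simpa using h3
    have hfiber : ∀ b, (Finset.univ.filter (fun j => q j = b)) = Finset.univ.image (φ b) := by
      intro b
      ext j
      simp only [Finset.mem_filter, Finset.mem_univ, true_and, Finset.mem_image]
      constructor
      · intro hj
        obtain ⟨⟨b₀, t₀⟩, hx⟩ : ∃ x, (sigEquiv c).symm (Fin.cast hsum.symm (σ.symm j)) = x :=
          ⟨_, rfl⟩
        have hq0 : q j = ((sigEquiv c).symm (Fin.cast hsum.symm (σ.symm j))).fst := rfl
        have hb₀ : b₀ = b := by
          rw [← hj, hq0, hx]
        subst hb₀
        refine ⟨t₀, ?_⟩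
        rw [hφdef]
        simp only
        have : sigEquiv c ⟨b₀, t₀⟩ = Fin.cast hsum.symm (σ.symm j) := by
          rw [← hx, Equiv.apply_symm_apply]
        rw [this]
        have : Fin.cast hsum (Fin.cast hsum.symm (σ.symm j)) = σ.symm j := Fin.ext rfl
        rw [this, Equiv.apply_symm_apply]
      · rintro ⟨t, rfl⟩
        exact hq1 b t
    have hlen : ∀ b, (blkIdx q b).length = c b := by
      intro b
      rw [length_blkIdx, hfiber b, Finset.card_image_of_injective _ (hφinj b),
        Finset.card_univ, Fintype.card_fin]
    have hlenB : ∀ b, lenB v q b = c b := fun b => (lenB_eq v q b).trans (hlen b)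
    -- construct g
    have hmem : ∀ (b) (t : Fin (lenB v q b)),
        φ b (Fin.cast (hlenB b) t) ∈ blkIdx q b := fun b t => mem_blkIdx.2 (hq1 b _)
    set g : ∀ b, Equiv.Perm (Fin (lenB v q b)) := fun b =>
      Equiv.ofBijective (fun t => (⟨(blkIdx q b).idxOf (φ b (Fin.cast (hlenB b) t)),
        lt_of_lt_of_le (List.idxOf_lt_length_iff.2 (hmem b t)) (lenB_eq v q b).symm.le⟩ :
          Fin (lenB v q b)))
        (Finite.injective_iff_bijective.1 (by
          intro t t' h
          have hval := congrArg Fin.val h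
          simp only at hval
          have h1 : φ b (Fin.cast (hlenB b) t) = φ b (Fin.cast (hlenB b) t') := by
            have e1 := List.getElem_idxOf (α := Fin m)
              (List.idxOf_lt_length_iff.2 (hmem b t))
            have e2 := List.getElem_idxOf (α := Fin m)
              (List.idxOf_lt_length_iff.2 (hmem b t'))
            rw [← e1, ← e2]
            congr 1
          have h2 := hφinj b h1
          have := congrArg Fin.val h2
          simpa using Fin.ext (n := lenB v q b) this)) with hgdef
    refine ⟨⟨q, g⟩, Finset.mem_sigma.2 ⟨Finset.mem_univ _, Finset.mem_univ _⟩, ?_⟩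
    refine Sigma.ext ?_ ?_
    · apply Equiv.ext
      intro i
      obtain ⟨b, t, ht⟩ := exists_seg' (fun b => lenB v q b) (sum_lenB v q) i
      rw [bigPerm_apply v q g (b := b) (t := t) ht]
      have e1 : (blkIdx q b).get (Fin.cast (lenB_eq v q b) ((g b) t))
          = φ b (Fin.cast (hlenB b) t) := by
        rw [List.get_eq_getElem]
        exact List.getElem_idxOf (List.idxOf_lt_length_iff.2 (hmem b t))
      rw [e1, hφdef]
      simp only
      congr 1
      apply Fin.ext
      rw [Fin.coe_cast, sigEquiv_apply, ht]
      simp only [Fin.coe_cast]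
      congr 1
      unfold off
      exact Finset.sum_congr rfl (fun j _ => (hlenB j).symm)
    · exact heq_of_eq (funext hlenB)
  · -- payload
    rintro ⟨q, g⟩ -
    congr 1
    funext b
    have hsum : ∑ j, lenB v q j = m := sum_lenB v q
    have hoff : off (fun b => lenB v q b) b + lenB v q b ≤ m := by
      have := off_add_le (fun b => lenB v q b) b
      omega
    apply List.ext_getElem
    · simp only [List.length_ofFn, List.length_take, List.length_drop]
      omega
    · intro n h1 h2
      simp only [List.length_ofFn] at h1
      rw [List.getElem_take, List.getElem_drop]
      simp only [List.getElem_ofFn]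
      have hlt : off (fun b => lenB v q b) b + n < m := by
        simp only [List.length_take, List.length_drop, List.length_ofFn] at h2
        omega
      rw [bigPerm_apply v q g (b := b) (t := ⟨n, h1⟩) (i := ⟨off (fun b => lenB v q b) b + n, by
        simpa [List.length_ofFn] using hlt⟩) rfl]
      show (blockL v q b).get _ = v ((blkIdx q b).get _)
      simp only [blockL, List.get_eq_getElem, List.getElem_map]
      refine (List.get_eq_getElem ..).trans ?_
      exact List.getElem_map ..

end E
end SymW


namespace SymW
open Finset Function

variable {A : Type*} [AddCommGroup A] [Module ℚ A]

lemma wk_two (k : ℕ) (f : MultilinearMap ℚ (fun _ : Fin k => A) A) (n : ℕ)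
    (l : List A) (hl : 2 ≤ l.length) :
    wk k f (n+1) l
      = ∑ c ∈ (Finset.Nat.antidiagonalTuple k l.length).filter (fun c => ∀ i, 1 ≤ c i),
        f (fun i => wk k f n ((l.drop (off c i)).take (c i))) := by
  rcases l with _ | ⟨x, _ | ⟨y, t⟩⟩
  · simp at hl
  · simp at hl
  · rfl

lemma wk_nil (k : ℕ) (hk : 1 ≤ k) (f : MultilinearMap ℚ (fun _ : Fin k => A) A) (n : ℕ) :
    wk k f n [] = 0 := by
  cases n with
  | zero => rfl
  | succ n =>
    have h0 : wk k f (n+1) ([] : List A)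
        = ∑ c ∈ (Finset.Nat.antidiagonalTuple k (0 : ℕ)).filter (fun c => ∀ i, 1 ≤ c i),
          f (fun i => wk k f n ((([] : List A).drop (off c i)).take (c i))) := rfl
    rw [h0]
    have hempty : (Finset.Nat.antidiagonalTuple k (0 : ℕ)).filter (fun c => ∀ i, 1 ≤ c i) = ∅ := by
      apply Finset.filter_eq_empty_iff.2
      intro c hc hpos
      have hsum : ∑ i, c i = 0 := Finset.Nat.mem_antidiagonalTuple.1 hc
      have h1 := hpos ⟨0, by omega⟩
      have h2 : c ⟨0, by omega⟩ ≤ ∑ i, c i :=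
        Finset.single_le_sum (f := c) (fun _ _ => Nat.zero_le _) (Finset.mem_univ _)
      omega
    rw [hempty, Finset.sum_empty]

lemma tk_cons (k : ℕ) (F : MultilinearMap ℚ (fun _ : Fin k => A) A) (n : ℕ)
    (x y : A) (t : List A) :
    tk k F (n+1) (x :: y :: t)
      = ∑ p ∈ (Finset.univ : Finset (Fin (x :: y :: t).length → Fin k)).filter
          (fun p => Surjective p ∧ ∀ i b', b' < p i → ∃ j, j < i ∧ p j = b'),
        F (fun b => tk k F n ((blkIdx p b).map (x :: y :: t).get)) := by
  rw [tk]
  · congr 1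
    exact Finset.filter_congr_decidable _ _ _
  · rintro a ⟨⟩

lemma tk_nil (k : ℕ) (hk : 1 ≤ k) (F : MultilinearMap ℚ (fun _ : Fin k => A) A) (n : ℕ) :
    tk k F n [] = 0 := by
  cases n with
  | zero => rfl
  | succ n =>
    have h0 : tk k F (n+1) ([] : List A)
        = ∑ p ∈ (Finset.univ : Finset (Fin ([] : List A).length → Fin k)).filter
            (fun p => Surjective p ∧ ∀ i b', b' < p i → ∃ j, j < i ∧ p j = b'),
          F (fun b => tk k F n ((blkIdx p b).map ([] : List A).get)) := by
      rw [tk]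
      · congr 1
        exact Finset.filter_congr_decidable _ _ _
      · rintro a ⟨⟩
    rw [h0]
    apply Finset.sum_eq_zero
    intro p hp
    have hs : Surjective p := (Finset.mem_filter.1 hp).2.1
    obtain ⟨i, -⟩ := hs ⟨0, by omega⟩
    exact i.elim0

set_option maxHeartbeats 2000000 in
lemma key (k : ℕ) (hk : 2 ≤ k) (f : MultilinearMap ℚ (fun _ : Fin k => A) A) :
    ∀ (n : ℕ) (l : List A), l.length ≤ n →
      tk k (∑ σ : Equiv.Perm (Fin k), f.domDomCongr σ) n l
        = ∑ σ : Equiv.Perm (Fin l.length), wk k f n (List.ofFn fun i => l.get (σ i)) := by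
  intro n
  induction n with
  | zero =>
    intro l hl
    have hnil : l = [] := List.length_eq_zero_iff.1 (Nat.le_zero.1 hl)
    subst hnil
    exact (Finset.sum_eq_zero (fun σ _ => rfl)).symm
  | succ n IH =>
    intro l hl
    have hk1 : 1 ≤ k := by omega
    rcases l with _ | ⟨x, _ | ⟨y, t⟩⟩
    · -- nil case
      rw [tk_nil k hk1]
      symm
      apply Finset.sum_eq_zero
      intro σ _
      have hofn : (List.ofFn fun i => ([] : List A).get (σ i)) = [] :=
        List.eq_nil_of_length_eq_zero (List.length_ofFn)
      rw [hofn, wk_nil k hk1]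
    · -- singleton case
      have hlen1 : ([x] : List A).length = 1 := rfl
      have hterm : ∀ σ : Equiv.Perm (Fin ([x] : List A).length),
          wk k f (n+1) (List.ofFn fun i => ([x] : List A).get (σ i)) = x := by
        intro σ
        have hσ : ∀ i, σ i = i := by
          intro i
          apply Fin.ext
          have h1 := (σ i).isLt
          have h2 := i.isLt
          omega
        have hfun : (fun i => ([x] : List A).get (σ i)) = ([x] : List A).get :=
          funext (fun i => by rw [hσ i])
        rw [hfun, List.ofFn_get]
        rfl
      rw [Finset.sum_congr rfl (fun σ _ => hterm σ), Finset.sum_const, Finset.card_univ,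
        Fintype.card_perm, Fintype.card_fin, hlen1]
      show (x : A) = Nat.factorial 1 • x
      rw [Nat.factorial_one, one_smul]
    · -- main case
      have hlenL : 2 ≤ (x :: y :: t).length := by simp
      calc tk k (∑ σ : Equiv.Perm (Fin k), f.domDomCongr σ) (n+1) (x :: y :: t)
          = ∑ p ∈ (Finset.univ : Finset (Fin (x :: y :: t).length → Fin k)).filter
              (fun p => Surjective p ∧ ∀ i b', b' < p i → ∃ j, j < i ∧ p j = b'),
            (∑ σ : Equiv.Perm (Fin k), f.domDomCongr σ)
              (fun b => tk k (∑ σ : Equiv.Perm (Fin k), f.domDomCongr σ) n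
                ((blkIdx p b).map (x :: y :: t).get)) := tk_cons k _ n x y t
        _ = ∑ p ∈ (Finset.univ : Finset (Fin (x :: y :: t).length → Fin k)).filter
              (fun p => Surjective p ∧ ∀ i b', b' < p i → ∃ j, j < i ∧ p j = b'),
            ∑ τ : Equiv.Perm (Fin k),
              f (fun b => tk k (∑ σ : Equiv.Perm (Fin k), f.domDomCongr σ) n
                (blockL (x :: y :: t).get (⇑τ⁻¹ ∘ p) b)) := by
            apply Finset.sum_congr rfl
            intro p hp
            rw [MultilinearMap.sum_apply]
            apply Finset.sum_congr rfl
            intro τ _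
            rw [MultilinearMap.domDomCongr_apply]
            congr 1
            funext b
            rw [show blockL (x :: y :: t).get (⇑τ⁻¹ ∘ p) b
                = (blkIdx p (τ b)).map (x :: y :: t).get from by rw [blockL, blkIdx_comp_inv]]
        _ = ∑ q ∈ (Finset.univ : Finset (Fin (x :: y :: t).length → Fin k)).filter
              (fun q => Surjective q),
            f (fun b => tk k (∑ σ : Equiv.Perm (Fin k), f.domDomCongr σ) n
              (blockL (x :: y :: t).get q b)) :=
            sum_nrm_perm (fun q => f (fun b =>
              tk k (∑ σ : Equiv.Perm (Fin k), f.domDomCongr σ) n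
                (blockL (x :: y :: t).get q b)))
        _ = ∑ q ∈ (Finset.univ : Finset (Fin (x :: y :: t).length → Fin k)).filter
              (fun q => Surjective q),
            ∑ g : (∀ b, Equiv.Perm (Fin (lenB (x :: y :: t).get q b))),
              f (fun b => wk k f n
                (List.ofFn fun i => (blockL (x :: y :: t).get q b).get ((g b) i))) := by
            apply Finset.sum_congr rfl
            intro q hq
            have hqs : Surjective q := (Finset.mem_filter.1 hq).2
            have hIH : ∀ b, tk k (∑ σ : Equiv.Perm (Fin k), f.domDomCongr σ) n
                (blockL (x :: y :: t).get q b)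
                = ∑ g : Equiv.Perm (Fin (lenB (x :: y :: t).get q b)),
                  wk k f n (List.ofFn fun i => (blockL (x :: y :: t).get q b).get (g i)) := by
              intro b
              have h1 := length_blkIdx_lt hk hqs b
              have h2 : (blockL (x :: y :: t).get q b).length = (blkIdx q b).length :=
                List.length_map _
              have h3 : (x :: y :: t).length ≤ n + 1 := hl
              exact IH (blockL (x :: y :: t).get q b) (by omega)
            rw [congrArg (fun v => f v) (funext hIH), MultilinearMap.map_sum]
        _ = ∑ q : Fin (x :: y :: t).length → Fin k,
            ∑ g : (∀ b, Equiv.Perm (Fin (lenB (x :: y :: t).get q b))),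
              f (fun b => wk k f n
                (List.ofFn fun i => (blockL (x :: y :: t).get q b).get ((g b) i))) := by
            apply Finset.sum_filter_of_ne
            intro q _ hne
            by_contra hqs
            apply hne
            obtain ⟨b₀, hb₀⟩ := blkIdx_eq_nil_of_not_surj hqs
            apply Finset.sum_eq_zero
            intro g _
            apply MultilinearMap.map_coord_zero _ b₀
            have hzero : lenB (x :: y :: t).get q b₀ = 0 := by
              rw [lenB_eq, hb₀]; rfl
            have hofn : (List.ofFn fun i =>
                (blockL (x :: y :: t).get q b₀).get ((g b₀) i)) = [] :=
              List.eq_nil_of_length_eq_zero (by rw [List.length_ofFn]; exact hzero)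
            rw [hofn, wk_nil k hk1]
        _ = ∑ σ : Equiv.Perm (Fin (x :: y :: t).length),
            ∑ c ∈ Finset.Nat.antidiagonalTuple k (x :: y :: t).length,
              f (fun i => wk k f n
                (((List.ofFn fun j => (x :: y :: t).get (σ j)).drop (off c i)).take (c i))) :=
            sum_blocks_eq (x :: y :: t).get (fun w => f (fun b => wk k f n (w b)))
        _ = ∑ σ : Equiv.Perm (Fin (x :: y :: t).length),
            wk k f (n+1) (List.ofFn fun i => (x :: y :: t).get (σ i)) := by
            apply Finset.sum_congr rfl
            intro σ _
            rw [wk_two k f n _ (by rw [List.length_ofFn]; exact hlenL)]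
            rw [show (List.ofFn fun i => (x :: y :: t).get (σ i)).length
              = (x :: y :: t).length from List.length_ofFn]
            symm
            apply Finset.sum_filter_of_ne
            intro c _ hne
            by_contra hpos
            apply hne
            push_neg at hpos
            obtain ⟨i₀, hi₀⟩ := hpos
            apply MultilinearMap.map_coord_zero _ i₀
            have hzero : c i₀ = 0 := by omega
            rw [hzero, List.take_zero, wk_nil k hk1]

end SymW

theorem symmetrized_tdk_of_wdk' {A : Type*} [AddCommGroup A] [Module ℚ A]
    (k : ℕ) (hk : 2 ≤ k) (f : MultilinearMap ℚ (fun _ : Fin k => A) A) (d : ℕ)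
    (h : ∀ l : List A, l.length = d → Wk k f l = 0) :
    ∀ l : List A, l.length = d →
      Tk k (∑ σ : Equiv.Perm (Fin k), f.domDomCongr σ) l = 0 := by
  intro l hl
  rw [Tk, SymW.key k hk f l.length l le_rfl]
  apply Finset.sum_eq_zero
  intro σ _
  have hh := h (List.ofFn fun i => l.get (σ i)) (by rw [List.length_ofFn]; exact hl)
  rw [Wk] at hh
  rwa [List.length_ofFn] at hh


/-- If a `k`-ary algebra over `ℚ` satisfies the identity `w_d⁽ᵏ⁾ = 0`, then the
totally symmetrized operation `[a₁…a_k] = Σ_{σ∈S_k} (a_{σ(1)}…a_{σ(k)})` satisfies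
the identity `t_d⁽ᵏ⁾ = 0`. -/
theorem symmetrized_tdk_of_wdk {A : Type*} [AddCommGroup A] [Module ℚ A]
    (k : ℕ) (hk : 2 ≤ k) (f : MultilinearMap ℚ (fun _ : Fin k => A) A) (d : ℕ)
    (h : ∀ l : List A, l.length = d → Wk k f l = 0) :
    ∀ l : List A, l.length = d →
      Tk k (∑ σ : Equiv.Perm (Fin k), f.domDomCongr σ) l = 0 := by
  exact symmetrized_tdk_of_wdk' k hk f d h
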